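/- Let G be a nearly Abelian c-valued group. Then for every f ∈ G with f ≠ 1, the centralizer C(f) = {g ∈ G : f*g = g*f} is a malnormal subgroup of G: for every g ∈ G with g ∉ C(f), one has C(f) ∩ g*C(f)*g⁻¹ = {1}. (In particular, G is a CSA-group.) -/
import Mathlib


variable {G : Type*} [Group G]

/-- `f ≺ g` : strict part of the dominance relation. -/
def vlt (le : G → G → Prop) (f g : G) : Prop := le f g ∧ ¬ le g f

/-- `f ≍ g` : equivalence induced by the dominance relation. -/
def veq (le : G → G → Prop) (f g : G) : Prop := le f g ∧ le g f

/-- A dominance relation on a group `G`, making it a valued group: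
a reflexive, transitive, total relation satisfying D1-D4. -/
structure IsValuation (le : G → G → Prop) : Prop where
  refl : ∀ f : G, le f f
  trans : ∀ f g h : G, le f g → le g h → le f h
  total : ∀ f g : G, le f g ∨ le g f
  d1 : ∀ f : G, f ≠ 1 → vlt le 1 f
  d2 : ∀ f g : G, le (f * g) f ∨ le (f * g) g
  d3 : ∀ f g h : G, le f g → le (h * f * h⁻¹) (h * g * h⁻¹)
  d4 : ∀ f : G, veq le f f⁻¹

/-- A c-dominance relation: a dominance relation moreover satisfying D5 and D6. -/
structure IsCValuation (le : G → G → Prop) extends IsValuation le : Prop where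
  d5 : ∀ f g : G, f ≠ 1 → g ≠ 1 → f * g = g * f → veq le f g
  d6 : ∀ f g : G, f ≠ 1 → g ≠ 1 → veq le f g → vlt le (f⁻¹ * g⁻¹ * f * g) f

/-- A valued group is nearly Abelian if `⁅f,g⁆ ≺ f` and `⁅f,g⁆ ≺ g` for all
nonidentity `f, g`. -/
def NearlyAbelian (le : G → G → Prop) : Prop :=
  ∀ f g : G, f ≠ 1 → g ≠ 1 →
    vlt le (f⁻¹ * g⁻¹ * f * g) f ∧ vlt le (f⁻¹ * g⁻¹ * f * g) g

/-- Proposition 7.11: in a nearly Abelian c-valued group, centralizers of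
nonidentity elements are malnormal: if `g ∉ C(f)` then `C(f) ∩ g C(f) g⁻¹ = {1}`.
Here `x ∈ g C(f) g⁻¹` iff `g⁻¹*x*g ∈ C(f)`. -/
theorem centralizer_malnormal (le : G → G → Prop) (hv : IsCValuation le)
    (hna : NearlyAbelian le) (f : G) (hf : f ≠ 1) :
    ∀ g : G, ¬ (f * g = g * f) →
      ∀ x : G, f * x = x * f → f * (g⁻¹ * x * g) = (g⁻¹ * x * g) * f → x = 1 := by
  intro g hg x hx hy
  by_contra hx1
  have hg1 : g ≠ 1 := by rintro rfl; simp at hg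
  have hfx : Commute f x := hx
  have hfy : Commute f (g⁻¹ * x * g) := hy
  -- Step 1: x commutes with g.
  have hxg : x * g = g * x := by
    by_contra hc1
    have hc_ne : x⁻¹ * g⁻¹ * x * g ≠ 1 := by
      intro h
      apply hc1
      have : x * (x⁻¹ * g⁻¹ * x * g) = x * 1 := by rw [h]
      group at this
      calc x * g = g * (g⁻¹ * x * g) := by group
        _ = g * x := by rw [show g⁻¹ * x * g = x by group at this ⊢; exact this]
    have hceq : x⁻¹ * g⁻¹ * x * g = x⁻¹ * (g⁻¹ * x * g) := by group
    have hfc : Commute f (x⁻¹ * g⁻¹ * x * g) := by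
      rw [hceq]; exact hfx.inv_right.mul_right hfy
    have h5c := hv.d5 f _ hf hc_ne hfc
    have h5x := hv.d5 f x hf hx1 hfx
    have hlt := (hna x g hx1 hg1).1
    exact hlt.2 (hv.trans _ _ _ h5x.2 h5c.1)
  have hxg' : Commute x g := hxg
  -- Step 2: derive a contradiction with f*g ≠ g*f.
  have hd_ne : f⁻¹ * g⁻¹ * f * g ≠ 1 := by
    intro h
    apply hg
    have : f * (f⁻¹ * g⁻¹ * f * g) = f * 1 := by rw [h]
    group at this
    calc f * g = g * (g⁻¹ * f * g) := by group
      _ = g * f := by rw [show g⁻¹ * f * g = f by group at this ⊢; exact this]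
  have hxd : Commute x (f⁻¹ * g⁻¹ * f * g) := by
    have := ((hfx.symm.inv_right.mul_right hxg'.inv_right).mul_right
      hfx.symm).mul_right hxg'
    simpa [mul_assoc] using this
  have h5d := hv.d5 x _ hx1 hd_ne hxd
  have h5x := hv.d5 f x hf hx1 hfx
  have hlt := (hna f g hf hg1).1
  exact hlt.2 (hv.trans _ _ _ h5x.1 h5d.1)
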